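/- Let M be a real m×n matrix with singular value decomposition M = [U_1 U_2]·diag(Σ_1, Σ_2)·[V_1 V_2]^*, where Σ_1 is the r×r diagonal matrix of the r largest singular values of M and the columns of V_1 are the corresponding r top right singular vectors. Let H be an n×l matrix with ||H||_2 ≤ 1, write C_1 = V_1^*H, and assume rank(C_1) = r. Let XY = MH(MH)^+M. Then ||M − XY|| / σ̃_{r+1}(M) ≤ (1 + ||C_1^+||²)^{1/2}, where ||·|| denotes either the spectral norm or the Frobenius norm, and σ̃_{r+1}(M) denotes the corresponding optimal rank-r approximation error. -/

import Mathlib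

open Matrix MeasureTheory ProbabilityTheory Real
open scoped BigOperators ENNReal

noncomputable section

namespace LRA

/-- The `j`-th largest singular value (1-indexed) of a real `m × n` matrix;
by convention it is `0` for `j = 0` or `j > n`. -/
noncomputable def sval {m n : ℕ} (A : Matrix (Fin m) (Fin n) ℝ) (j : ℕ) : ℝ :=
  if hj : 1 ≤ j ∧ j ≤ n then
    Real.sqrt ((show (Aᵀ * A).IsHermitian from Matrix.isHermitian_conjTranspose_mul_self A).eigenvalues
      (Tuple.sort (show (Aᵀ * A).IsHermitian from Matrix.isHermitian_conjTranspose_mul_self A).eigenvalues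
        (Fin.rev ⟨j - 1, by omega⟩)))
  else 0

/-- Spectral norm: the largest singular value. -/
noncomputable def specNorm {m n : ℕ} (A : Matrix (Fin m) (Fin n) ℝ) : ℝ := sval A 1

/-- Frobenius norm. -/
noncomputable def frobNorm {m n : ℕ} (A : Matrix (Fin m) (Fin n) ℝ) : ℝ :=
  Real.sqrt (∑ i, ∑ j, (A i j) ^ 2)

/-- The optimal Frobenius rank-`r` approximation error `(∑_{j>r} σ_j(A)²)^{1/2}`. -/
noncomputable def frobTail {m n : ℕ} (A : Matrix (Fin m) (Fin n) ℝ) (r : ℕ) : ℝ :=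
  Real.sqrt (∑ j ∈ Finset.Ioc r n, sval A j ^ 2)

/-- The four Penrose conditions. -/
def IsMoorePenrose {m n : ℕ} (A : Matrix (Fin m) (Fin n) ℝ)
    (B : Matrix (Fin n) (Fin m) ℝ) : Prop :=
  A * B * A = A ∧ B * A * B = B ∧ (A * B)ᵀ = A * B ∧ (B * A)ᵀ = B * A

open scoped Classical in
/-- The Moore–Penrose pseudoinverse. -/
noncomputable def pinv {m n : ℕ} (A : Matrix (Fin m) (Fin n) ℝ) :
    Matrix (Fin n) (Fin m) ℝ :=
  if h : ∃ B, IsMoorePenrose A B then h.choose else 0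

/-- The `r`-projective volume `∏_{j=1}^r σ_j(A)`. -/
noncomputable def pvol {m n : ℕ} (r : ℕ) (A : Matrix (Fin m) (Fin n) ℝ) : ℝ :=
  ∏ j ∈ Finset.Icc 1 r, sval A j

instance matrixMeasurableSpace {p q : ℕ} : MeasurableSpace (Matrix (Fin p) (Fin q) ℝ) :=
  MeasurableSpace.pi

/-- A random matrix all of whose entries are i.i.d. standard normal random variables. -/
def IsGaussianMatrix {Ω : Type*} [MeasurableSpace Ω] (μ : Measure Ω) {p q : ℕ}
    (G : Ω → Matrix (Fin p) (Fin q) ℝ) : Prop :=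
  Measurable G ∧
  iIndepFun (β := fun _ : Fin p × Fin q => ℝ)
    (fun ij ω => G ω ij.1 ij.2) μ ∧
  ∀ i j, Measure.map (fun ω => G ω i j) μ = gaussianReal 0 1

/-- The `k × l` submatrix of `W` with rows indexed by `I` and columns by `J`. -/
noncomputable def subm {m n k l : ℕ} (W : Matrix (Fin m) (Fin n) ℝ)
    {I : Finset (Fin m)} {J : Finset (Fin n)} (hI : I.card = k) (hJ : J.card = l) :
    Matrix (Fin k) (Fin l) ℝ :=
  W.submatrix (fun i => ((I.orderIsoOfFin hI i : I) : Fin m))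
    (fun j => ((J.orderIsoOfFin hJ j : J) : Fin n))

section Helpers

/-- squared Euclidean norm of a vector -/
noncomputable def vsq {k : ℕ} (x : Fin k → ℝ) : ℝ := ∑ i, x i ^ 2

lemma vsq_nonneg {k : ℕ} (x : Fin k → ℝ) : 0 ≤ vsq x :=
  Finset.sum_nonneg fun _ _ => sq_nonneg _

lemma vsq_eq_dot {k : ℕ} (x : Fin k → ℝ) : vsq x = x ⬝ᵥ x := by
  simp [vsq, dotProduct, pow_two]

lemma dot_mulVec_eq {m n : ℕ} (A : Matrix (Fin m) (Fin n) ℝ) (x : Fin m → ℝ) (y : Fin n → ℝ) :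
    x ⬝ᵥ A *ᵥ y = (Aᵀ *ᵥ x) ⬝ᵥ y := by
  rw [Matrix.dotProduct_mulVec, Matrix.mulVec_transpose]

lemma vsq_mulVec {m n : ℕ} (A : Matrix (Fin m) (Fin n) ℝ) (x : Fin n → ℝ) :
    vsq (A *ᵥ x) = x ⬝ᵥ ((Aᵀ * A) *ᵥ x) := by
  rw [vsq_eq_dot, ← Matrix.mulVec_mulVec, dot_mulVec_eq Aᵀ x, Matrix.transpose_transpose]

end Helpers
section Spectral

variable {m n : ℕ}

/-- abbreviation for the eigenvector unitary of `AᵀA` -/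
noncomputable def eU (A : Matrix (Fin m) (Fin n) ℝ) : Matrix (Fin n) (Fin n) ℝ :=
  ((show (Aᵀ * A).IsHermitian from Matrix.isHermitian_conjTranspose_mul_self A).eigenvectorUnitary : Matrix (Fin n) (Fin n) ℝ)

/-- eigenvalues of `AᵀA` -/
noncomputable def ed (A : Matrix (Fin m) (Fin n) ℝ) : Fin n → ℝ :=
  (show (Aᵀ * A).IsHermitian from Matrix.isHermitian_conjTranspose_mul_self A).eigenvalues

lemma eU_tmul (A : Matrix (Fin m) (Fin n) ℝ) : (eU A)ᵀ * eU A = 1 :=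
  Unitary.coe_star_mul_self ((show (Aᵀ * A).IsHermitian from Matrix.isHermitian_conjTranspose_mul_self A).eigenvectorUnitary)

lemma eU_mult (A : Matrix (Fin m) (Fin n) ℝ) : eU A * (eU A)ᵀ = 1 :=
  Unitary.coe_mul_star_self ((show (Aᵀ * A).IsHermitian from Matrix.isHermitian_conjTranspose_mul_self A).eigenvectorUnitary)

lemma spec_decomp (A : Matrix (Fin m) (Fin n) ℝ) :
    Aᵀ * A = eU A * Matrix.diagonal (ed A) * (eU A)ᵀ := by
  have h := (show (Aᵀ * A).IsHermitian from Matrix.isHermitian_conjTranspose_mul_self A).spectral_theorem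
  rw [Unitary.conjStarAlgAut_apply, RCLike.ofReal_real_eq_id, Function.id_comp] at h
  exact h

lemma ed_nonneg (A : Matrix (Fin m) (Fin n) ℝ) (i : Fin n) : 0 ≤ ed A i :=
  (Matrix.posSemidef_conjTranspose_mul_self A).eigenvalues_nonneg i

lemma qform_eq (A : Matrix (Fin m) (Fin n) ℝ) (x : Fin n → ℝ) :
    x ⬝ᵥ ((Aᵀ * A) *ᵥ x) = ∑ i, ed A i * ((eU A)ᵀ *ᵥ x) i ^ 2 := by
  rw [spec_decomp, ← Matrix.mulVec_mulVec, ← Matrix.mulVec_mulVec, dot_mulVec_eq]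
  simp only [Matrix.mulVec_diagonal, dotProduct]
  congr 1; funext i; ring

lemma vsq_eU_t (A : Matrix (Fin m) (Fin n) ℝ) (x : Fin n → ℝ) :
    vsq ((eU A)ᵀ *ᵥ x) = vsq x := by
  rw [vsq_mulVec, Matrix.transpose_transpose, eU_mult, Matrix.one_mulVec, ← vsq_eq_dot]

end Spectral
section SvalFacts

variable {m n : ℕ}

lemma sval_eq (A : Matrix (Fin m) (Fin n) ℝ) {j : ℕ} (h1 : 1 ≤ j) (h2 : j ≤ n) :
    sval A j = Real.sqrt (ed A (Tuple.sort (ed A) (Fin.rev ⟨j - 1, by omega⟩))) := by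
  rw [sval, dif_pos ⟨h1, h2⟩]
  rfl

lemma sval_nonneg (A : Matrix (Fin m) (Fin n) ℝ) (j : ℕ) : 0 ≤ sval A j := by
  rw [sval]
  split
  · exact Real.sqrt_nonneg _
  · exact le_refl 0

lemma sval_sq (A : Matrix (Fin m) (Fin n) ℝ) {j : ℕ} (h1 : 1 ≤ j) (h2 : j ≤ n) :
    sval A j ^ 2 = ed A (Tuple.sort (ed A) (Fin.rev ⟨j - 1, by omega⟩)) := by
  rw [sval_eq A h1 h2, Real.sq_sqrt (ed_nonneg A _)]

lemma sval_antitone (A : Matrix (Fin m) (Fin n) ℝ) {j j' : ℕ} (h1 : 1 ≤ j) (h2 : j ≤ j') :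
    sval A j' ≤ sval A j := by
  by_cases h3 : j' ≤ n
  · rw [sval_eq A h1 (le_trans h2 h3), sval_eq A (le_trans h1 h2) h3]
    apply Real.sqrt_le_sqrt
    have hmono := Tuple.monotone_sort (ed A)
    have hle : (Fin.rev ⟨j' - 1, by omega⟩ : Fin n) ≤ Fin.rev ⟨j - 1, by omega⟩ := by
      simp only [Fin.le_def, Fin.val_rev]
      omega
    exact hmono hle
  · rw [sval, dif_neg (by omega)]
    exact sval_nonneg A j

lemma ed_le_top (A : Matrix (Fin m) (Fin n) ℝ) (hn : 1 ≤ n) (i : Fin n) :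
    ed A i ≤ ed A (Tuple.sort (ed A) (Fin.rev ⟨1 - 1, by omega⟩)) := by
  have hmono := Tuple.monotone_sort (ed A)
  have h := hmono (show (Tuple.sort (ed A)).symm i ≤ Fin.rev ⟨1 - 1, by omega⟩ by
    simp only [Fin.le_def, Fin.val_rev]
    have := ((Tuple.sort (ed A)).symm i).isLt
    omega)
  simpa using h

lemma specNorm_nonneg (A : Matrix (Fin m) (Fin n) ℝ) : 0 ≤ specNorm A :=
  sval_nonneg A 1

lemma specNorm_mulVec_sq (A : Matrix (Fin m) (Fin n) ℝ) (x : Fin n → ℝ) :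
    vsq (A *ᵥ x) ≤ specNorm A ^ 2 * vsq x := by
  rcases Nat.eq_zero_or_pos n with hn | hn
  · subst hn
    have h1 : A *ᵥ x = 0 := by
      funext i
      simp [Matrix.mulVec, dotProduct]
    rw [h1]
    have : vsq (0 : Fin m → ℝ) = 0 := by simp [vsq]
    rw [this]
    exact mul_nonneg (sq_nonneg _) (vsq_nonneg _)
  · rw [vsq_mulVec, qform_eq, specNorm, sval_sq A le_rfl hn]
    calc ∑ i, ed A i * ((eU A)ᵀ *ᵥ x) i ^ 2
        ≤ ∑ i, ed A (Tuple.sort (ed A) (Fin.rev ⟨1 - 1, by omega⟩)) * ((eU A)ᵀ *ᵥ x) i ^ 2 := by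
          apply Finset.sum_le_sum
          intro i _
          exact mul_le_mul_of_nonneg_right (ed_le_top A hn i) (sq_nonneg _)
      _ = ed A (Tuple.sort (ed A) (Fin.rev ⟨1 - 1, by omega⟩)) * vsq ((eU A)ᵀ *ᵥ x) := by
          rw [← Finset.mul_sum]; rfl
      _ = _ := by rw [vsq_eU_t]

lemma specNorm_eq_zero_of (A : Matrix (Fin m) (Fin n) ℝ) (hn : n = 0) : specNorm A = 0 := by
  rw [specNorm, sval, dif_neg (by omega)]

lemma specNorm_le_of (A : Matrix (Fin m) (Fin n) ℝ) {c : ℝ} (hc : 0 ≤ c)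
    (h : ∀ x, vsq (A *ᵥ x) ≤ c ^ 2 * vsq x) : specNorm A ≤ c := by
  rcases Nat.eq_zero_or_pos n with hn | hn
  · rw [specNorm_eq_zero_of A hn]; exact hc
  · set j₀ := Tuple.sort (ed A) (Fin.rev ⟨1 - 1, by omega⟩) with hj₀
    set v : Fin n → ℝ := fun i => eU A i j₀ with hv
    have hvv : vsq v = 1 := by
      have h1 : vsq v = ((eU A)ᵀ * eU A) j₀ j₀ := by
        simp [vsq, Matrix.mul_apply, hv, pow_two]
      rw [h1, eU_tmul, Matrix.one_apply_eq]
    have hy : (eU A)ᵀ *ᵥ v = fun k => (1 : Matrix (Fin n) (Fin n) ℝ) k j₀ := by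
      funext k
      have : ((eU A)ᵀ *ᵥ v) k = ((eU A)ᵀ * eU A) k j₀ := by
        simp [Matrix.mulVec, Matrix.mul_apply, dotProduct, hv]
      rw [this, eU_tmul]
    have hAv : vsq (A *ᵥ v) = specNorm A ^ 2 := by
      rw [vsq_mulVec, qform_eq, hy, specNorm, sval_sq A le_rfl hn]
      rw [Finset.sum_eq_single j₀]
      · simp only [Matrix.one_apply_eq, one_pow, mul_one]
        rfl
      · intro b _ hb
        simp [Matrix.one_apply, hb]
      · intro hj; exact absurd (Finset.mem_univ _) hj
    have := h v
    rw [hAv, hvv, mul_one] at this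
    nlinarith [specNorm_nonneg A]

lemma specNorm_mul_le {p q s : ℕ} (A : Matrix (Fin p) (Fin q) ℝ) (B : Matrix (Fin q) (Fin s) ℝ) :
    specNorm (A * B) ≤ specNorm A * specNorm B := by
  apply specNorm_le_of _ (mul_nonneg (specNorm_nonneg A) (specNorm_nonneg B))
  intro x
  rw [← Matrix.mulVec_mulVec, mul_pow]
  calc vsq (A *ᵥ B *ᵥ x) ≤ specNorm A ^ 2 * vsq (B *ᵥ x) := specNorm_mulVec_sq A _
    _ ≤ specNorm A ^ 2 * (specNorm B ^ 2 * vsq x) :=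
        mul_le_mul_of_nonneg_left (specNorm_mulVec_sq B x) (sq_nonneg _)
    _ = specNorm A ^ 2 * specNorm B ^ 2 * vsq x := by ring

lemma specNorm_transpose_le {p q : ℕ} (A : Matrix (Fin p) (Fin q) ℝ) :
    specNorm Aᵀ ≤ specNorm A := by
  apply specNorm_le_of _ (specNorm_nonneg A)
  intro x
  set t := vsq (Aᵀ *ᵥ x) with ht
  have ht0 : 0 ≤ t := vsq_nonneg _
  have hdot : t = x ⬝ᵥ (A *ᵥ (Aᵀ *ᵥ x)) := by
    rw [ht, vsq_eq_dot, dot_mulVec_eq A x (Aᵀ *ᵥ x)]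
  have hcs : t ^ 2 ≤ vsq x * vsq (A *ᵥ (Aᵀ *ᵥ x)) := by
    rw [hdot]
    have := Finset.sum_mul_sq_le_sq_mul_sq Finset.univ x (A *ᵥ (Aᵀ *ᵥ x))
    simpa [dotProduct, vsq] using this
  have h2 : vsq (A *ᵥ (Aᵀ *ᵥ x)) ≤ specNorm A ^ 2 * t := specNorm_mulVec_sq A _
  have h3 : t ^ 2 ≤ vsq x * (specNorm A ^ 2 * t) :=
    le_trans hcs (mul_le_mul_of_nonneg_left h2 (vsq_nonneg x))
  rcases eq_or_lt_of_le ht0 with h0 | h0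
  · rw [← h0]
    exact mul_nonneg (sq_nonneg _) (vsq_nonneg _)
  · have := (mul_le_mul_iff_of_pos_right h0).mp (by nlinarith : t * t ≤ (specNorm A ^ 2 * vsq x) * t)
    exact this

end SvalFacts
section Frob

lemma frobNorm_nonneg {p q : ℕ} (A : Matrix (Fin p) (Fin q) ℝ) : 0 ≤ frobNorm A :=
  Real.sqrt_nonneg _

lemma frobNorm_sq {p q : ℕ} (A : Matrix (Fin p) (Fin q) ℝ) :
    frobNorm A ^ 2 = ∑ i, ∑ j, A i j ^ 2 := by
  rw [frobNorm, Real.sq_sqrt]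
  exact Finset.sum_nonneg fun _ _ => Finset.sum_nonneg fun _ _ => sq_nonneg _

lemma frobNorm_sq_col {p q : ℕ} (A : Matrix (Fin p) (Fin q) ℝ) :
    frobNorm A ^ 2 = ∑ j, vsq (fun i => A i j) := by
  rw [frobNorm_sq, Finset.sum_comm]
  rfl

lemma le_of_sq_le_sq {a b : ℝ} (ha : 0 ≤ a) (hb : 0 ≤ b) (h : a ^ 2 ≤ b ^ 2) : a ≤ b := by
  nlinarith

lemma frobNorm_mul_le_of {p q s : ℕ} (Q : Matrix (Fin p) (Fin q) ℝ)
    (B : Matrix (Fin q) (Fin s) ℝ) {c : ℝ} (hc : 0 ≤ c)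
    (h : ∀ x, vsq (Q *ᵥ x) ≤ c ^ 2 * vsq x) : frobNorm (Q * B) ≤ c * frobNorm B := by
  apply le_of_sq_le_sq (frobNorm_nonneg _) (mul_nonneg hc (frobNorm_nonneg _))
  rw [mul_pow, frobNorm_sq_col, frobNorm_sq_col, Finset.mul_sum]
  apply Finset.sum_le_sum
  intro j _
  have hcol : (fun i => (Q * B) i j) = Q *ᵥ (fun k => B k j) := by
    funext i
    simp [Matrix.mul_apply, Matrix.mulVec, dotProduct]
  rw [hcol]
  exact h _

lemma frobNorm_spec_mul {p q s : ℕ} (A : Matrix (Fin p) (Fin q) ℝ)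
    (B : Matrix (Fin q) (Fin s) ℝ) : frobNorm (A * B) ≤ specNorm A * frobNorm B :=
  frobNorm_mul_le_of A B (specNorm_nonneg A) (specNorm_mulVec_sq A)

lemma frobNorm_sq_diag {p q : ℕ} (A : Matrix (Fin p) (Fin q) ℝ) :
    frobNorm A ^ 2 = ∑ i, (A * Aᵀ) i i := by
  rw [frobNorm_sq]
  apply Finset.sum_congr rfl
  intro i _
  simp [Matrix.mul_apply, pow_two]

lemma frobTail_nonneg {p q : ℕ} (A : Matrix (Fin p) (Fin q) ℝ) (r : ℕ) :
    0 ≤ frobTail A r := Real.sqrt_nonneg _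

lemma sval_le_frobTail {p q : ℕ} (A : Matrix (Fin p) (Fin q) ℝ) (r : ℕ) :
    sval A (r + 1) ≤ frobTail A r := by
  by_cases h : r + 1 ≤ q
  · have h1 : sval A (r + 1) = Real.sqrt (sval A (r + 1) ^ 2) :=
      (Real.sqrt_sq (sval_nonneg A _)).symm
    rw [h1, frobTail]
    apply Real.sqrt_le_sqrt
    apply Finset.single_le_sum (f := fun j => sval A j ^ 2)
    · intro j _
      exact sq_nonneg _
    · simp only [Finset.mem_Ioc]
      omega
  · rw [sval, dif_neg (by omega)]
    exact frobTail_nonneg A r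

end Frob
section Pinv

lemma exists_moorePenrose {p q : ℕ} (A : Matrix (Fin p) (Fin q) ℝ) :
    ∃ B, IsMoorePenrose A B := by
  classical
  set U := eU A with hU
  set d := ed A with hd
  have hUt : Uᵀ * U = 1 := eU_tmul A
  have hUm : U * Uᵀ = 1 := eU_mult A
  have hspec : Aᵀ * A = U * Matrix.diagonal d * Uᵀ := spec_decomp A
  have wU : ∀ {s : ℕ} (X : Matrix (Fin q) (Fin s) ℝ), Uᵀ * (U * X) = X := fun X => by
    rw [← Matrix.mul_assoc, hUt, Matrix.one_mul]
  have hsym : ∀ (f : Fin q → ℝ),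
      (U * (Matrix.diagonal f * Uᵀ))ᵀ = U * (Matrix.diagonal f * Uᵀ) := fun f => by
    rw [Matrix.transpose_mul, Matrix.transpose_mul, Matrix.transpose_transpose,
      Matrix.diagonal_transpose, Matrix.mul_assoc]
  set dp : Fin q → ℝ := fun i => if d i = 0 then 0 else (d i)⁻¹ with hdp
  set e : Fin q → ℝ := fun i => if d i = 0 then 0 else 1 with he
  set B := U * (Matrix.diagonal dp * (Uᵀ * Aᵀ)) with hB
  have hdpd : Matrix.diagonal dp * Matrix.diagonal d = Matrix.diagonal e := by
    rw [Matrix.diagonal_mul_diagonal]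
    exact congrArg Matrix.diagonal (funext fun i => by
      by_cases h : d i = 0 <;> simp [hdp, he, h, inv_mul_cancel₀])
  have hedp : Matrix.diagonal e * Matrix.diagonal dp = Matrix.diagonal dp := by
    rw [Matrix.diagonal_mul_diagonal]
    exact congrArg Matrix.diagonal (funext fun i => by
      by_cases h : d i = 0 <;> simp [hdp, he, h])
  have hBA : B * A = U * (Matrix.diagonal e * Uᵀ) := by
    rw [hB]
    calc U * (Matrix.diagonal dp * (Uᵀ * Aᵀ)) * A
        = U * (Matrix.diagonal dp * (Uᵀ * (Aᵀ * A))) := by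
          simp only [Matrix.mul_assoc]
      _ = U * (Matrix.diagonal dp * (Matrix.diagonal d * Uᵀ)) := by
          rw [hspec, Matrix.mul_assoc, wU]
      _ = U * (Matrix.diagonal e * Uᵀ) := by
          rw [← Matrix.mul_assoc (Matrix.diagonal dp), hdpd]
  set W := U * (Matrix.diagonal (fun i => 1 - e i) * Uᵀ) with hW
  have hWsym : Wᵀ = W := hsym _
  have hAW : A * W = 0 := by
    have h1 : (A * W)ᴴ * (A * W) = 0 := by
      have hcalc : Wᵀ * ((Aᵀ * A) * W) = 0 := by
        rw [hspec, hWsym, hW]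
        calc U * (Matrix.diagonal (fun i => 1 - e i) * Uᵀ) *
              (U * Matrix.diagonal d * Uᵀ * (U * (Matrix.diagonal (fun i => 1 - e i) * Uᵀ)))
            = U * (Matrix.diagonal (fun i => 1 - e i) *
                (Matrix.diagonal d * (Matrix.diagonal (fun i => 1 - e i) * Uᵀ))) := by
              simp only [Matrix.mul_assoc, wU]
          _ = U * ((Matrix.diagonal (fun i => 1 - e i) * Matrix.diagonal d *
                Matrix.diagonal (fun i => 1 - e i)) * Uᵀ) := by
              simp only [Matrix.mul_assoc]
          _ = 0 := by
              rw [Matrix.diagonal_mul_diagonal, Matrix.diagonal_mul_diagonal]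
              have : (fun i => (1 - e i) * d i * (1 - e i)) = (fun _ : Fin q => (0:ℝ)) := by
                funext i
                by_cases h : d i = 0 <;> simp [he, h]
              rw [this, Matrix.diagonal_zero, Matrix.zero_mul, Matrix.mul_zero]
      show (A * W)ᵀ * (A * W) = 0
      calc (A * W)ᵀ * (A * W) = Wᵀ * ((Aᵀ * A) * W) := by
            rw [Matrix.transpose_mul]
            simp only [Matrix.mul_assoc]
        _ = 0 := hcalc
    exact Matrix.conjTranspose_mul_self_eq_zero.mp h1
  have hone : U * (Matrix.diagonal e * Uᵀ) + W = 1 := by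
    rw [hW, ← Matrix.mul_add, ← Matrix.add_mul, Matrix.diagonal_add]
    have h9 : (fun i => e i + (1 - e i)) = (fun _ : Fin q => (1:ℝ)) := by
      funext i; simp
    rw [h9, Matrix.diagonal_one, Matrix.one_mul, hUm]
  have hAE : A * (U * (Matrix.diagonal e * Uᵀ)) = A := by
    have h2 : U * (Matrix.diagonal e * Uᵀ) = 1 - W := by
      rw [← hone, add_sub_cancel_right]
    rw [h2, Matrix.mul_sub, Matrix.mul_one, hAW, sub_zero]
  refine ⟨B, ?_, ?_, ?_, ?_⟩
  · -- A * B * A = A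
    calc A * B * A = A * (B * A) := by rw [Matrix.mul_assoc]
      _ = A * (U * (Matrix.diagonal e * Uᵀ)) := by rw [hBA]
      _ = A := hAE
  · -- B * A * B = B
    rw [hBA, hB]
    calc U * (Matrix.diagonal e * Uᵀ) * (U * (Matrix.diagonal dp * (Uᵀ * Aᵀ)))
        = U * (Matrix.diagonal e * (Matrix.diagonal dp * (Uᵀ * Aᵀ))) := by
          simp only [Matrix.mul_assoc, wU]
      _ = U * ((Matrix.diagonal e * Matrix.diagonal dp) * (Uᵀ * Aᵀ)) := by
          simp only [Matrix.mul_assoc]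
      _ = U * (Matrix.diagonal dp * (Uᵀ * Aᵀ)) := by rw [hedp]
  · -- (A * B)ᵀ = A * B
    have hAB : A * B = A * (U * (Matrix.diagonal dp * Uᵀ)) * Aᵀ := by
      rw [hB]
      simp only [Matrix.mul_assoc]
    rw [hAB, Matrix.transpose_mul, Matrix.transpose_mul, Matrix.transpose_transpose, hsym]
    simp only [Matrix.mul_assoc]
  · -- (B * A)ᵀ = B * A
    rw [hBA, hsym]

lemma pinv_isMoorePenrose {p q : ℕ} (A : Matrix (Fin p) (Fin q) ℝ) :
    IsMoorePenrose A (pinv A) := by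
  rw [pinv, dif_pos (exists_moorePenrose A)]
  exact (exists_moorePenrose A).choose_spec

lemma mul_pinv_of_rank {r l : ℕ} (C : Matrix (Fin r) (Fin l) ℝ) (h : C.rank = r) :
    C * pinv C = 1 := by
  have pen := pinv_isMoorePenrose C
  have hsurj : Function.Surjective C.mulVecLin := by
    rw [← LinearMap.range_eq_top]
    apply Submodule.eq_top_of_finrank_eq
    show Module.finrank ℝ (LinearMap.range C.mulVecLin) = Module.finrank ℝ (Fin r → ℝ)
    rw [Module.finrank_pi, Fintype.card_fin]
    exact h
  choose R hR using fun i => hsurj (Pi.single i 1)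
  set Rm : Matrix (Fin l) (Fin r) ℝ := Matrix.of (fun j i => R i j) with hRm
  have hCR : C * Rm = 1 := by
    ext a b
    have h1 : (C * Rm) a b = (C *ᵥ (R b)) a := by
      simp [Matrix.mul_apply, Matrix.mulVec, dotProduct, hRm]
    have h2 : C *ᵥ (R b) = Pi.single b 1 := by
      rw [← Matrix.mulVecLin_apply]; exact hR b
    rw [h1, h2, Matrix.one_apply, Pi.single_apply]
  calc C * pinv C = C * pinv C * (C * Rm) := by rw [hCR, Matrix.mul_one]
    _ = C * pinv C * C * Rm := by simp only [Matrix.mul_assoc]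
    _ = C * Rm := by rw [pen.1]
    _ = 1 := hCR

end Pinv
section S2Bounds

variable {m n r : ℕ}

lemma S2_spec_bound (M : Matrix (Fin m) (Fin n) ℝ)
    (S2 : Matrix (Fin (m - r)) (Fin (n - r)) ℝ)
    (hS2 : S2 = Matrix.of fun (i : Fin (m - r)) (j : Fin (n - r)) =>
      if (i : ℕ) = (j : ℕ) then sval M (r + (j : ℕ) + 1) else 0)
    (x : Fin (n - r) → ℝ) :
    vsq (S2 *ᵥ x) ≤ sval M (r + 1) ^ 2 * vsq x := by
  have hent : ∀ i j, S2 i j = if (i : ℕ) = (j : ℕ) then sval M (r + (j : ℕ) + 1) else 0 := by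
    intro i j; rw [hS2]; rfl
  have hmv : ∀ i : Fin (m - r), (S2 *ᵥ x) i =
      if h : (i : ℕ) < n - r then sval M (r + (i : ℕ) + 1) * x ⟨i, h⟩ else 0 := by
    intro i
    show (∑ j, S2 i j * x j) = _
    by_cases h : (i : ℕ) < n - r
    · rw [dif_pos h, Finset.sum_eq_single (⟨(i : ℕ), h⟩ : Fin (n - r))]
      · rw [hent]; simp
      · intro b _ hb
        rw [hent, if_neg, zero_mul]
        intro hc
        exact hb (Fin.ext hc.symm)
      · intro hb; exact absurd (Finset.mem_univ _) hb
    · rw [dif_neg h]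
      apply Finset.sum_eq_zero
      intro b _
      rw [hent, if_neg, zero_mul]
      intro hc
      exact h (hc ▸ b.isLt)
  set σ := sval M (r + 1) with hσdef
  have hσ : 0 ≤ σ := sval_nonneg M _
  set g : ℕ → ℝ := fun t => if h : t < n - r then (x ⟨t, h⟩) ^ 2 else 0 with hg
  have hg0 : ∀ t, 0 ≤ g t := by
    intro t; rw [hg]; dsimp only; split
    · exact sq_nonneg _
    · exact le_rfl
  have hterm : ∀ i : Fin (m - r), ((S2 *ᵥ x) i) ^ 2 ≤ σ ^ 2 * g ↑i := by
    intro i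
    rw [hmv i]
    by_cases h : (i : ℕ) < n - r
    · rw [dif_pos h, hg]
      dsimp only
      rw [dif_pos h, mul_pow]
      apply mul_le_mul_of_nonneg_right _ (sq_nonneg _)
      exact pow_le_pow_left₀ (sval_nonneg M _) (sval_antitone M (by omega) (by omega)) 2
    · rw [dif_neg h, hg]
      dsimp only
      rw [dif_neg h]
      simp
  calc vsq (S2 *ᵥ x) = ∑ i, ((S2 *ᵥ x) i) ^ 2 := rfl
    _ ≤ ∑ i : Fin (m - r), σ ^ 2 * g ↑i := Finset.sum_le_sum fun i _ => hterm i
    _ = σ ^ 2 * ∑ i : Fin (m - r), g ↑i := by rw [Finset.mul_sum]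
    _ ≤ σ ^ 2 * ∑ j : Fin (n - r), g ↑j := by
        apply mul_le_mul_of_nonneg_left _ (sq_nonneg σ)
        rw [Fin.sum_univ_eq_sum_range (fun t => g t), Fin.sum_univ_eq_sum_range (fun t => g t)]
        rcases le_total (m - r) (n - r) with hmn | hmn
        · exact Finset.sum_le_sum_of_subset_of_nonneg (Finset.range_subset_range.mpr hmn)
            fun t _ _ => hg0 t
        · apply le_of_eq
          symm
          apply Finset.sum_subset (Finset.range_subset_range.mpr hmn)
          intro t _ ht
          rw [Finset.mem_range, not_lt] at ht
          rw [hg]; dsimp only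
          rw [dif_neg (by omega)]
    _ = σ ^ 2 * vsq x := by
        congr 1
        apply Finset.sum_congr rfl
        intro j _
        rw [hg]; dsimp only
        rw [dif_pos j.isLt]

lemma S2_frob_bound (M : Matrix (Fin m) (Fin n) ℝ)
    (S2 : Matrix (Fin (m - r)) (Fin (n - r)) ℝ)
    (hS2 : S2 = Matrix.of fun (i : Fin (m - r)) (j : Fin (n - r)) =>
      if (i : ℕ) = (j : ℕ) then sval M (r + (j : ℕ) + 1) else 0) :
    frobNorm S2 ≤ frobTail M r := by
  have hent : ∀ i j, S2 i j = if (i : ℕ) = (j : ℕ) then sval M (r + (j : ℕ) + 1) else 0 := by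
    intro i j; rw [hS2]; rfl
  rw [frobNorm, frobTail]
  apply Real.sqrt_le_sqrt
  rw [Finset.sum_comm]
  have hinner : ∀ j : Fin (n - r), (∑ i : Fin (m - r), (S2 i j) ^ 2) ≤ sval M (r + ↑j + 1) ^ 2 := by
    intro j
    by_cases h : (j : ℕ) < m - r
    · rw [Finset.sum_eq_single (⟨(j : ℕ), h⟩ : Fin (m - r))]
      · rw [hent]; simp
      · intro b _ hb
        rw [hent, if_neg]
        · exact zero_pow (by norm_num)
        · intro hc
          exact hb (Fin.ext hc)
      · intro hb; exact absurd (Finset.mem_univ _) hb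
    · have : ∀ i : Fin (m - r), (S2 i j) ^ 2 = 0 := by
        intro i
        rw [hent, if_neg]
        · exact zero_pow (by norm_num)
        · intro hc
          exact h (hc ▸ i.isLt)
      rw [Finset.sum_congr rfl fun i _ => this i]
      simp [sq_nonneg]
  calc ∑ j : Fin (n - r), ∑ i : Fin (m - r), (S2 i j) ^ 2
      ≤ ∑ j : Fin (n - r), sval M (r + ↑j + 1) ^ 2 := Finset.sum_le_sum fun j _ => hinner j
    _ = ∑ t ∈ Finset.range (n - r), sval M (r + t + 1) ^ 2 :=
        Fin.sum_univ_eq_sum_range (fun t => sval M (r + t + 1) ^ 2) _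
    _ = ∑ k ∈ Finset.Ioc r n, sval M k ^ 2 := by
        have hmap : Finset.Ioc r n =
            (Finset.range (n - r)).map ⟨fun t => r + t + 1, fun a b hab => by dsimp at hab; omega⟩ := by
          ext k
          simp only [Finset.mem_Ioc, Finset.mem_map, Finset.mem_range,
            Function.Embedding.coeFn_mk]
          constructor
          · intro ⟨h1, h2⟩
            exact ⟨k - r - 1, by omega, by show r + (k - r - 1) + 1 = k; omega⟩
          · intro ⟨t, ht, hk⟩
            have hk' : r + t + 1 = k := hk
            omega
        rw [hmap, Finset.sum_map]
        rfl

end S2Bounds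
section Proj

lemma vsq_isometry {p q : ℕ} (Q : Matrix (Fin p) (Fin q) ℝ) (h : Qᵀ * Q = 1)
    (x : Fin q → ℝ) : vsq (Q *ᵥ x) = vsq x := by
  rw [vsq_mulVec, h, Matrix.one_mulVec, ← vsq_eq_dot]

lemma proj_ann {p q : ℕ} (A : Matrix (Fin p) (Fin q) ℝ) :
    (1 - A * pinv A) * A = 0 := by
  rw [Matrix.sub_mul, Matrix.one_mul, (pinv_isMoorePenrose A).1, sub_self]

lemma proj_contract {p q : ℕ} (A : Matrix (Fin p) (Fin q) ℝ) (y : Fin p → ℝ) :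
    vsq ((1 - A * pinv A) *ᵥ y) ≤ vsq y := by
  have pen := pinv_isMoorePenrose A
  set P := A * pinv A with hP
  have hPt : Pᵀ = P := pen.2.2.1
  have hPP : P * P = P := by
    calc P * P = A * pinv A * A * pinv A := by rw [hP]; simp only [Matrix.mul_assoc]
      _ = P := by rw [pen.1, hP]
  have hexp : (1 - P)ᵀ * (1 - P) = 1 - P := by
    rw [Matrix.transpose_sub, Matrix.transpose_one, hPt]
    calc (1 - P) * (1 - P) = 1 - P - P + P * P := by
          simp only [Matrix.sub_mul, Matrix.mul_sub, Matrix.one_mul, Matrix.mul_one, ← hP]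
          abel
      _ = 1 - P := by rw [hPP]; abel
  have h1 : vsq ((1 - P) *ᵥ y) = vsq y - vsq (P *ᵥ y) := by
    rw [vsq_mulVec, hexp, Matrix.sub_mulVec, dotProduct_sub, Matrix.one_mulVec,
      ← vsq_eq_dot]
    congr 1
    rw [vsq_mulVec]
    congr 1
    rw [hPt, hPP]
  rw [h1]
  exact sub_le_self _ (vsq_nonneg _)

end Proj
set_option maxHeartbeats 2000000 in
theorem rangeFinder_relative_error_bound {m n l r : ℕ} (hrm : r ≤ m) (hrn : r ≤ n)
    (M : Matrix (Fin m) (Fin n) ℝ)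
    (U1 : Matrix (Fin m) (Fin r) ℝ) (U2 : Matrix (Fin m) (Fin (m - r)) ℝ)
    (V1 : Matrix (Fin n) (Fin r) ℝ) (V2 : Matrix (Fin n) (Fin (n - r)) ℝ)
    (hU1 : U1ᵀ * U1 = 1) (hU2 : U2ᵀ * U2 = 1) (hU12 : U1ᵀ * U2 = 0)
    (hV1 : V1ᵀ * V1 = 1) (hV2 : V2ᵀ * V2 = 1) (hV12 : V1ᵀ * V2 = 0)
    (S1 : Matrix (Fin r) (Fin r) ℝ) (S2 : Matrix (Fin (m - r)) (Fin (n - r)) ℝ)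
    (hS1 : S1 = Matrix.diagonal fun i : Fin r => sval M ((i : ℕ) + 1))
    (hS2 : S2 = Matrix.of fun (i : Fin (m - r)) (j : Fin (n - r)) =>
      if (i : ℕ) = (j : ℕ) then sval M (r + (j : ℕ) + 1) else 0)
    (hSVD : M = U1 * S1 * V1ᵀ + U2 * S2 * V2ᵀ)
    (H : Matrix (Fin n) (Fin l) ℝ) (hH : specNorm H ≤ 1)
    (C1 : Matrix (Fin r) (Fin l) ℝ) (C2 : Matrix (Fin (n - r)) (Fin l) ℝ)
    (hC1 : C1 = V1ᵀ * H) (hC2 : C2 = V2ᵀ * H) (hC1rank : C1.rank = r) :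
    specNorm (M - M * H * pinv (M * H) * M) / sval M (r + 1) ≤
        Real.sqrt (1 + specNorm (pinv C1) ^ 2) ∧
    frobNorm (M - M * H * pinv (M * H) * M) / frobTail M r ≤
        Real.sqrt (1 + frobNorm (pinv C1) ^ 2) := by
  have pen1 : (1 - M * H * pinv (M * H)) * (M * H) = 0 := proj_ann (M * H)
  set G := pinv C1 with hGdef
  have f1 : C1 * G = 1 := mul_pinv_of_rank C1 hC1rank
  -- main algebraic identity
  have hMH : M * H = U1 * S1 * C1 + U2 * S2 * C2 := by
    rw [hC1, hC2, hSVD]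
    simp only [Matrix.add_mul, Matrix.mul_assoc]
  have e3 : C1 * (G * V1ᵀ) = V1ᵀ := by rw [← Matrix.mul_assoc, f1, Matrix.one_mul]
  set K := S2 * V2ᵀ - S2 * C2 * G * V1ᵀ with hK
  have h5 : M - U2 * K = M * H * (G * V1ᵀ) := by
    rw [hK, hMH, hSVD]
    simp only [Matrix.add_mul, Matrix.sub_mul, Matrix.mul_sub, Matrix.mul_assoc, e3]
    abel
  have h8 : M = U2 * K + M * H * (G * V1ᵀ) := by
    rw [← h5]; abel
  have h7 : (1 - M * H * pinv (M * H)) * (M * H * (G * V1ᵀ)) = 0 := by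
    rw [← Matrix.mul_assoc, pen1, Matrix.zero_mul]
  have h6 : (1 - M * H * pinv (M * H)) * M = M - M * H * pinv (M * H) * M := by
    rw [Matrix.sub_mul, Matrix.one_mul]
  have key : M - M * H * pinv (M * H) * M = (1 - M * H * pinv (M * H)) * U2 * K := by
    rw [← h6]
    have h9 : (1 - M * H * pinv (M * H)) * M =
        (1 - M * H * pinv (M * H)) * (U2 * K) + (1 - M * H * pinv (M * H)) * (M * H * (G * V1ᵀ)) := by
      rw [← Matrix.mul_add, ← h8]
    rw [h9, h7, add_zero, ← Matrix.mul_assoc]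
  -- contraction of the projector composed with U2
  have hQ : ∀ x, vsq (((1 - M * H * pinv (M * H)) * U2) *ᵥ x) ≤ 1 ^ 2 * vsq x := by
    intro x
    rw [← Matrix.mulVec_mulVec, one_pow, one_mul]
    calc vsq ((1 - M * H * pinv (M * H)) *ᵥ (U2 *ᵥ x)) ≤ vsq (U2 *ᵥ x) :=
          proj_contract (M * H) _
      _ = vsq x := vsq_isometry U2 hU2 x
  -- block Gram identity
  set Z := S2 * C2 * G with hZ
  have hV21 : V2ᵀ * V1 = 0 := by
    have h := congrArg Matrix.transpose hV12
    simpa using h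
  have w1 : ∀ {s : ℕ} (Y : Matrix (Fin (n - r)) (Fin s) ℝ), V2ᵀ * (V2 * Y) = Y := by
    intro s Y; rw [← Matrix.mul_assoc, hV2, Matrix.one_mul]
  have w2 : ∀ {s : ℕ} (Y : Matrix (Fin r) (Fin s) ℝ), V1ᵀ * (V1 * Y) = Y := by
    intro s Y; rw [← Matrix.mul_assoc, hV1, Matrix.one_mul]
  have w3 : ∀ {s : ℕ} (Y : Matrix (Fin (n - r)) (Fin s) ℝ), V1ᵀ * (V2 * Y) = 0 := by
    intro s Y; rw [← Matrix.mul_assoc, hV12, Matrix.zero_mul]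
  have w4 : ∀ {s : ℕ} (Y : Matrix (Fin r) (Fin s) ℝ), V2ᵀ * (V1 * Y) = 0 := by
    intro s Y; rw [← Matrix.mul_assoc, hV21, Matrix.zero_mul]
  have hKK : K * Kᵀ = S2 * S2ᵀ + Z * Zᵀ := by
    rw [hK, hZ]
    simp only [Matrix.transpose_sub, Matrix.transpose_mul, Matrix.transpose_transpose,
      Matrix.sub_mul, Matrix.mul_sub, Matrix.mul_assoc, w1, w2, w3, w4,
      Matrix.mul_zero, Matrix.zero_mul, sub_zero, zero_sub]
    abel
  -- norm bounds
  set σ := sval M (r + 1) with hσdef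
  have hσ0 : 0 ≤ σ := sval_nonneg M _
  have hS2spec : specNorm S2 ≤ σ :=
    specNorm_le_of S2 hσ0 (fun x => S2_spec_bound M S2 hS2 x)
  have hV2spec : specNorm V2 ≤ 1 :=
    specNorm_le_of V2 zero_le_one (fun x => by rw [vsq_isometry V2 hV2 x, one_pow, one_mul])
  have hC2spec : specNorm C2 ≤ 1 := by
    rw [hC2]
    calc specNorm (V2ᵀ * H) ≤ specNorm V2ᵀ * specNorm H := specNorm_mul_le _ _
      _ ≤ 1 * 1 := mul_le_mul ((specNorm_transpose_le V2).trans hV2spec) hH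
            (specNorm_nonneg H) zero_le_one
      _ = 1 := by norm_num
  have hS2C2 : specNorm (S2 * C2) ≤ σ := by
    calc specNorm (S2 * C2) ≤ specNorm S2 * specNorm C2 := specNorm_mul_le _ _
      _ ≤ σ * 1 := mul_le_mul hS2spec hC2spec (specNorm_nonneg C2) hσ0
      _ = σ := mul_one σ
  have hZspec : specNorm Z ≤ σ * specNorm G := by
    rw [hZ]
    calc specNorm (S2 * C2 * G) ≤ specNorm (S2 * C2) * specNorm G := specNorm_mul_le _ _
      _ ≤ σ * specNorm G := mul_le_mul_of_nonneg_right hS2C2 (specNorm_nonneg G)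
  -- spectral bound on K
  have hcs : ∀ y, vsq (Kᵀ *ᵥ y) ≤
      Real.sqrt (σ ^ 2 + (σ * specNorm G) ^ 2) ^ 2 * vsq y := by
    intro y
    rw [Real.sq_sqrt (by positivity)]
    have h1 : vsq (Kᵀ *ᵥ y) = y ⬝ᵥ ((K * Kᵀ) *ᵥ y) := by
      rw [vsq_mulVec, Matrix.transpose_transpose]
    rw [h1, hKK, Matrix.add_mulVec, dotProduct_add]
    have h2 : y ⬝ᵥ ((S2 * S2ᵀ) *ᵥ y) = vsq (S2ᵀ *ᵥ y) := by
      rw [vsq_mulVec, Matrix.transpose_transpose]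
    have h3 : y ⬝ᵥ ((Z * Zᵀ) *ᵥ y) = vsq (Zᵀ *ᵥ y) := by
      rw [vsq_mulVec, Matrix.transpose_transpose]
    rw [h2, h3]
    have b2 : vsq (S2ᵀ *ᵥ y) ≤ σ ^ 2 * vsq y := by
      calc vsq (S2ᵀ *ᵥ y) ≤ specNorm S2ᵀ ^ 2 * vsq y := specNorm_mulVec_sq _ _
        _ ≤ σ ^ 2 * vsq y := mul_le_mul_of_nonneg_right
              (pow_le_pow_left₀ (specNorm_nonneg _)
                ((specNorm_transpose_le S2).trans hS2spec) 2) (vsq_nonneg y)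
    have b3 : vsq (Zᵀ *ᵥ y) ≤ (σ * specNorm G) ^ 2 * vsq y := by
      calc vsq (Zᵀ *ᵥ y) ≤ specNorm Zᵀ ^ 2 * vsq y := specNorm_mulVec_sq _ _
        _ ≤ (σ * specNorm G) ^ 2 * vsq y := mul_le_mul_of_nonneg_right
              (pow_le_pow_left₀ (specNorm_nonneg _)
                ((specNorm_transpose_le Z).trans hZspec) 2) (vsq_nonneg y)
    calc vsq (S2ᵀ *ᵥ y) + vsq (Zᵀ *ᵥ y) ≤ σ ^ 2 * vsq y + (σ * specNorm G) ^ 2 * vsq y :=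
          add_le_add b2 b3
      _ = (σ ^ 2 + (σ * specNorm G) ^ 2) * vsq y := by ring
  have hKt : specNorm Kᵀ ≤ Real.sqrt (σ ^ 2 + (σ * specNorm G) ^ 2) :=
    specNorm_le_of _ (Real.sqrt_nonneg _) hcs
  have hKs : specNorm K ≤ Real.sqrt (σ ^ 2 + (σ * specNorm G) ^ 2) := by
    have h := specNorm_transpose_le Kᵀ
    rw [Matrix.transpose_transpose] at h
    exact h.trans hKt
  have hfact : Real.sqrt (σ ^ 2 + (σ * specNorm G) ^ 2) =
      σ * Real.sqrt (1 + specNorm G ^ 2) := by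
    rw [show σ ^ 2 + (σ * specNorm G) ^ 2 = σ ^ 2 * (1 + specNorm G ^ 2) by ring,
      Real.sqrt_mul (sq_nonneg σ), Real.sqrt_sq hσ0]
  have hnum_spec : specNorm (M - M * H * pinv (M * H) * M) ≤
      σ * Real.sqrt (1 + specNorm G ^ 2) := by
    rw [key, ← hfact]
    apply specNorm_le_of _ (Real.sqrt_nonneg _)
    intro x
    rw [← Matrix.mulVec_mulVec]
    calc vsq (((1 - M * H * pinv (M * H)) * U2) *ᵥ (K *ᵥ x)) ≤ 1 ^ 2 * vsq (K *ᵥ x) := hQ _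
      _ = vsq (K *ᵥ x) := by rw [one_pow, one_mul]
      _ ≤ specNorm K ^ 2 * vsq x := specNorm_mulVec_sq _ _
      _ ≤ Real.sqrt (σ ^ 2 + (σ * specNorm G) ^ 2) ^ 2 * vsq x :=
          mul_le_mul_of_nonneg_right (pow_le_pow_left₀ (specNorm_nonneg K) hKs 2) (vsq_nonneg x)
  -- Frobenius bound on K
  set T := frobTail M r with hTdef
  have hT0 : 0 ≤ T := frobTail_nonneg M r
  have hσT : σ ≤ T := sval_le_frobTail M r
  have hfS2 : frobNorm S2 ≤ T := S2_frob_bound M S2 hS2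
  have hfZ : frobNorm Z ≤ T * frobNorm G := by
    rw [hZ]
    calc frobNorm (S2 * C2 * G) ≤ specNorm (S2 * C2) * frobNorm G := frobNorm_spec_mul _ _
      _ ≤ σ * frobNorm G := mul_le_mul_of_nonneg_right hS2C2 (frobNorm_nonneg G)
      _ ≤ T * frobNorm G := mul_le_mul_of_nonneg_right hσT (frobNorm_nonneg G)
  have hKfrob_sq : frobNorm K ^ 2 = frobNorm S2 ^ 2 + frobNorm Z ^ 2 := by
    rw [frobNorm_sq_diag K, hKK]
    simp only [Matrix.add_apply]
    rw [Finset.sum_add_distrib, ← frobNorm_sq_diag, ← frobNorm_sq_diag]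
  have hKfrob : frobNorm K ≤ T * Real.sqrt (1 + frobNorm G ^ 2) := by
    apply le_of_sq_le_sq (frobNorm_nonneg K) (by positivity)
    rw [hKfrob_sq, mul_pow, Real.sq_sqrt (by positivity)]
    have b1 : frobNorm S2 ^ 2 ≤ T ^ 2 := pow_le_pow_left₀ (frobNorm_nonneg _) hfS2 2
    have b2 : frobNorm Z ^ 2 ≤ (T * frobNorm G) ^ 2 :=
      pow_le_pow_left₀ (frobNorm_nonneg _) hfZ 2
    calc frobNorm S2 ^ 2 + frobNorm Z ^ 2 ≤ T ^ 2 + (T * frobNorm G) ^ 2 := add_le_add b1 b2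
      _ = T ^ 2 * (1 + frobNorm G ^ 2) := by ring
  have hnum_frob : frobNorm (M - M * H * pinv (M * H) * M) ≤
      T * Real.sqrt (1 + frobNorm G ^ 2) := by
    rw [key]
    calc frobNorm ((1 - M * H * pinv (M * H)) * U2 * K)
        ≤ 1 * frobNorm K := frobNorm_mul_le_of _ K zero_le_one hQ
      _ = frobNorm K := one_mul _
      _ ≤ T * Real.sqrt (1 + frobNorm G ^ 2) := hKfrob
  constructor
  · rcases eq_or_lt_of_le hσ0 with h0 | h0
    · rw [← h0, div_zero]
      positivity
    · rw [div_le_iff₀ h0]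
      calc specNorm (M - M * H * pinv (M * H) * M) ≤ σ * Real.sqrt (1 + specNorm G ^ 2) :=
            hnum_spec
        _ = Real.sqrt (1 + specNorm G ^ 2) * σ := mul_comm _ _
  · rcases eq_or_lt_of_le hT0 with h0 | h0
    · rw [← h0, div_zero]
      positivity
    · rw [div_le_iff₀ h0]
      calc frobNorm (M - M * H * pinv (M * H) * M) ≤ T * Real.sqrt (1 + frobNorm G ^ 2) :=
            hnum_frob
        _ = Real.sqrt (1 + frobNorm G ^ 2) * T := mul_comm _ _

end LRA
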